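/- (Boundedness of the measure.) For all integers k ≥ 0, f ≥ 1, N ≥ 0 and every integer x with 0 ≤ x < f·p^N: |E^{(k)}_{u:a_1,q}(x ; f·p^N)|_p ≤ 1. -/

import Mathlib

open Filter Finset

/-- For `q` in a normed field and a `p`-adic integer `z`, the power `q^z`, defined as the
limit of `q^(z mod p^N)` (for convergent `q` this agrees with `exp_p (z · log_p q)`). -/
noncomputable def qpow {p : ℕ} [Fact p.Prime] {K : Type*} [NormedField K] (q : K) (z : ℤ_[p]) :
    K :=
  limUnder atTop fun N : ℕ => q ^ (z.appr N)

/-- The `q`-number `[z : q] = (1 - q^z)/(1 - q)` for a `p`-adic integer `z`. -/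
noncomputable def qnum {p : ℕ} [Fact p.Prime] {K : Type*} [NormedField K] (q : K) (z : ℤ_[p]) :
    K :=
  (1 - qpow q z) / (1 - q)

/-- The `q`-analogue of the Euler–Barnes polynomial
`H_n^{(r)}(w, u, q | a_1, …, a_r)
  = (1-u)^r (1-q)^{-n} ∑_{l=0}^n C(n,l) (-1)^l q^{lw} ∏_j (1 - q^{l a_j} u)⁻¹`. -/
noncomputable def qEulerBarnes {p : ℕ} [Fact p.Prime] {K : Type*} [NormedField K]
    (r n : ℕ) (w : ℤ_[p]) (u q : K) (a : Fin r → ℤ_[p]) : K :=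
  (1 - u) ^ r * ((1 - q)⁻¹) ^ n *
    ∑ l ∈ Finset.range (n + 1),
      (n.choose l : K) * (-1) ^ l * qpow q ((l : ℤ_[p]) * w) *
        ∏ j, (1 - qpow q ((l : ℤ_[p]) * a j) * u)⁻¹

/-- The paper's distribution `E^{(k)}_{u:a_1,q}(x + M ℤ_p)` from formula (3):
`E^{(k)}(x; M) = u^x (1-q)^{-k} ∑_{l=0}^k C(k,l)(-1)^l q^{l a_1 x} (1 - q^{l a_1 M} u^M)⁻¹`. -/
noncomputable def Emeas {p : ℕ} [Fact p.Prime] {K : Type*} [NormedField K]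
    (u q : K) (a1 : ℤ_[p]) (k M x : ℕ) : K :=
  u ^ x * ((1 - q)⁻¹) ^ k *
    ∑ l ∈ Finset.range (k + 1),
      (k.choose l : K) * (-1) ^ l * qpow q (((l * x : ℕ) : ℤ_[p]) * a1) *
        (1 - qpow q (((l * M : ℕ) : ℤ_[p]) * a1) * u ^ M)⁻¹

open Topology IsUltrametricDist

section Aux

variable {K : Type*} [NormedField K] [IsUltrametricDist K]

lemma norm_one_sub_of_lt {y : K} (h : ‖y‖ < 1) : ‖1 - y‖ = 1 := by
  rw [sub_eq_add_neg, norm_add_eq_max_of_norm_ne_norm]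
  · simp [le_of_lt h]
  · simpa using h.ne' 

lemma norm_le_one_of_sub_lt {q : K} (hq : ‖q - 1‖ < 1) : ‖q‖ ≤ 1 := by
  calc ‖q‖ = ‖(q - 1) + 1‖ := by ring_nf
    _ ≤ max ‖q - 1‖ ‖(1 : K)‖ := norm_add_le_max _ _
    _ ≤ 1 := by rw [norm_one]; exact max_le hq.le le_rfl

lemma norm_pow_sub_one_le {q : K} (hq : ‖q‖ ≤ 1) (n : ℕ) : ‖q ^ n - 1‖ ≤ ‖q - 1‖ := by
  induction n with
  | zero => simp
  | succ n ih =>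
    have h : q ^ (n + 1) - 1 = q ^ n * (q - 1) + (q ^ n - 1) := by ring
    rw [h]
    refine (norm_add_le_max _ _).trans (max_le ?_ ih)
    rw [norm_mul, norm_pow]
    calc ‖q‖ ^ n * ‖q - 1‖ ≤ 1 * ‖q - 1‖ := by
          gcongr
          exact pow_le_one₀ (norm_nonneg q) hq
      _ = ‖q - 1‖ := one_mul _

lemma norm_pow_mul_sub_one_le {q : K} (hq : ‖q‖ ≤ 1) (a b : ℕ) :
    ‖q ^ (a * b) - 1‖ ≤ ‖q ^ a - 1‖ := by
  rw [pow_mul, ← geom_sum_mul, norm_mul]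
  calc ‖∑ i ∈ range b, (q ^ a) ^ i‖ * ‖q ^ a - 1‖ ≤ 1 * ‖q ^ a - 1‖ := by
        gcongr
        refine norm_sum_le_of_forall_le_of_nonneg zero_le_one fun i _ => ?_
        rw [← pow_mul, norm_pow]
        exact pow_le_one₀ (norm_nonneg q) hq
    _ = ‖q ^ a - 1‖ := one_mul _

lemma pascal_sum (k : ℕ) (G : ℕ → K) :
    ∑ l ∈ range (k + 2), (((k+1).choose l : K) * (-1) ^ l * G l)
      = ∑ l ∈ range (k + 1), ((k.choose l : K) * (-1) ^ l * (G l - G (l + 1))) := by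
  have hC2 : ∑ i ∈ range (k + 1), ((k.choose (i+1) : K) * (-1) ^ (i+1) * G (i+1))
      = ∑ l ∈ range (k + 1), ((k.choose l : K) * (-1) ^ l * G l) - G 0 := by
    have h1 := Finset.sum_range_succ (fun l => (k.choose l : K) * (-1) ^ l * G l) (k + 1)
    have h2 := Finset.sum_range_succ' (fun l => (k.choose l : K) * (-1) ^ l * G l) (k + 1)
    rw [h1] at h2
    simp only [Nat.choose_succ_self, Nat.cast_zero, Nat.choose_zero_right, Nat.cast_one,
      pow_zero] at h2
    rw [zero_mul, zero_mul, add_zero] at h2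
    linear_combination -h2
  rw [Finset.sum_range_succ' (fun l => (((k+1).choose l : K)) * (-1) ^ l * G l) (k + 1)]
  have h3 : ∀ i ∈ range (k + 1), (((k+1).choose (i+1) : K)) * (-1) ^ (i+1) * G (i+1)
      = -((k.choose i : K) * (-1) ^ i * G (i+1))
        + (k.choose (i+1) : K) * (-1) ^ (i+1) * G (i+1) := by
    intro i _
    have : (((k+1).choose (i+1) : K)) = (k.choose i : K) + (k.choose (i+1) : K) := by
      rw [Nat.choose_succ_succ]; push_cast; ring
    rw [this]; ring
  rw [Finset.sum_congr rfl h3, Finset.sum_add_distrib, hC2]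
  simp only [mul_sub, Finset.sum_sub_distrib, Finset.sum_neg_distrib]
  simp only [Nat.choose_zero_right, Nat.cast_one, pow_zero]
  ring

end Aux

section Padic

variable {p : ℕ} [Fact p.Prime] {K : Type*} [NormedField K] [IsUltrametricDist K]

lemma binom_step (hpK : ‖(p : K)‖ = (p : ℝ)⁻¹) {Q : K} {t : ℝ} (ht : t < 1) (hQ : ‖Q - 1‖ ≤ t) :
    ‖Q ^ p - 1‖ ≤ ‖Q - 1‖ * max (p : ℝ)⁻¹ (t ^ (p - 1)) := by
  have hp : p.Prime := Fact.out
  have ht0 : 0 ≤ t := (norm_nonneg _).trans hQ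
  have he1 : ‖Q - 1‖ ≤ 1 := hQ.trans ht.le
  have hmax : (0:ℝ) ≤ max (p : ℝ)⁻¹ (t ^ (p - 1)) :=
    le_max_of_le_left (by positivity)
  have hsum : Q ^ p - 1 = ∑ i ∈ range p, (Q - 1) ^ (i + 1) * (p.choose (i + 1) : K) := by
    have h := add_pow (Q - 1) 1 p
    simp only [one_pow, mul_one, sub_add_cancel] at h
    rw [Finset.sum_range_succ'] at h
    simp only [pow_zero, Nat.choose_zero_right, Nat.cast_one, one_mul] at h
    rw [h]; ring
  rw [hsum]
  refine norm_sum_le_of_forall_le_of_nonneg (by positivity) fun i hi => ?_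
  rw [norm_mul, norm_pow]
  rcases eq_or_lt_of_le (Nat.succ_le_of_lt (Finset.mem_range.mp hi)) with hip | hip
  · -- i + 1 = p
    have : i + 1 = p := by omega
    rw [this, Nat.choose_self, Nat.cast_one, norm_one, mul_one]
    calc ‖Q - 1‖ ^ p = ‖Q - 1‖ * ‖Q - 1‖ ^ (p - 1) := by
          rw [← pow_succ']
          congr 1
          omega
      _ ≤ ‖Q - 1‖ * t ^ (p - 1) :=
          mul_le_mul_of_nonneg_left (pow_le_pow_left₀ (norm_nonneg _) hQ _) (norm_nonneg _)
      _ ≤ ‖Q - 1‖ * max (p : ℝ)⁻¹ (t ^ (p - 1)) :=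
          mul_le_mul_of_nonneg_left (le_max_right _ _) (norm_nonneg _)
  · -- i + 1 < p
    obtain ⟨m, hm⟩ := hp.dvd_choose_self (Nat.succ_ne_zero i) hip
    have hC : ‖(p.choose (i + 1) : K)‖ ≤ (p : ℝ)⁻¹ := by
      rw [hm]
      push_cast
      rw [norm_mul, hpK]
      calc (p : ℝ)⁻¹ * ‖(m : K)‖ ≤ (p : ℝ)⁻¹ * 1 :=
            mul_le_mul_of_nonneg_left (norm_natCast_le_one K m) (by positivity)
        _ = (p : ℝ)⁻¹ := mul_one _
    calc ‖Q - 1‖ ^ (i + 1) * ‖(p.choose (i + 1) : K)‖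
        ≤ ‖Q - 1‖ * (p : ℝ)⁻¹ := by
          refine mul_le_mul ?_ hC (norm_nonneg _) (norm_nonneg _)
          calc ‖Q - 1‖ ^ (i + 1) = ‖Q - 1‖ * ‖Q - 1‖ ^ i := by rw [pow_succ']
            _ ≤ ‖Q - 1‖ * 1 := by gcongr; exact pow_le_one₀ (norm_nonneg _) he1
            _ = ‖Q - 1‖ := mul_one _
      _ ≤ ‖Q - 1‖ * max (p : ℝ)⁻¹ (t ^ (p - 1)) := by gcongr; exact le_max_left _ _

lemma pow_pow_step (hpK : ‖(p : K)‖ = (p : ℝ)⁻¹) {q : K} (hq : ‖q - 1‖ < 1) (N : ℕ) :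
    ‖q ^ (p ^ N) - 1‖ ≤ ‖q - 1‖ * (max (p : ℝ)⁻¹ (‖q - 1‖ ^ (p - 1))) ^ N := by
  have hp : p.Prime := Fact.out
  set r := max (p : ℝ)⁻¹ (‖q - 1‖ ^ (p - 1)) with hr
  have hr0 : 0 ≤ r := le_max_of_le_left (by positivity)
  have hr1 : r ≤ 1 := by
    apply max_le
    · rw [inv_le_one_iff₀]
      right
      exact_mod_cast hp.one_lt.le
    · exact pow_le_one₀ (norm_nonneg _) hq.le
  induction N with
  | zero => simp
  | succ N ih =>
    have h1 : q ^ p ^ (N + 1) = (q ^ p ^ N) ^ p := by rw [← pow_mul, ← pow_succ]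
    have h2 : ‖q ^ p ^ N - 1‖ ≤ ‖q - 1‖ := by
      calc ‖q ^ p ^ N - 1‖ ≤ ‖q - 1‖ * r ^ N := ih
        _ ≤ ‖q - 1‖ * 1 := by gcongr; exact pow_le_one₀ hr0 hr1
        _ = ‖q - 1‖ := mul_one _
    calc ‖q ^ p ^ (N + 1) - 1‖ = ‖(q ^ p ^ N) ^ p - 1‖ := by rw [h1]
      _ ≤ ‖q ^ p ^ N - 1‖ * r := binom_step hpK hq h2
      _ ≤ (‖q - 1‖ * r ^ N) * r := by gcongr
      _ = ‖q - 1‖ * r ^ (N + 1) := by ring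

lemma key_dvd_bound (hpK : ‖(p : K)‖ = (p : ℝ)⁻¹) {q : K} (hq : ‖q - 1‖ < 1) (N : ℕ) {a b : ℕ}
    (h : (p : ℤ) ^ N ∣ (a : ℤ) - (b : ℤ)) :
    ‖q ^ a - q ^ b‖ ≤ ‖q - 1‖ * (max (p : ℝ)⁻¹ (‖q - 1‖ ^ (p - 1))) ^ N := by
  have hq1 : ‖q‖ ≤ 1 := norm_le_one_of_sub_lt hq
  suffices H : ∀ a b : ℕ, b ≤ a → (p : ℤ) ^ N ∣ (a : ℤ) - (b : ℤ) →
      ‖q ^ a - q ^ b‖ ≤ ‖q - 1‖ * (max (p : ℝ)⁻¹ (‖q - 1‖ ^ (p - 1))) ^ N by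
    rcases le_total b a with hba | hab
    · exact H a b hba h
    · rw [norm_sub_rev]
      refine H b a hab ?_
      have := h.neg_right
      rwa [neg_sub] at this
  intro a b hba h
  have hd : p ^ N ∣ a - b := by
    have h' : ((p ^ N : ℕ) : ℤ) ∣ ((a - b : ℕ) : ℤ) := by
      rw [Nat.cast_sub hba]
      push_cast
      exact h
    exact_mod_cast h'
  obtain ⟨m, hm⟩ := hd
  have ha : q ^ a - q ^ b = q ^ b * (q ^ (a - b) - 1) := by
    rw [mul_sub, mul_one, ← pow_add]
    congr 2
    omega
  rw [ha, norm_mul, hm]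
  calc ‖q ^ b‖ * ‖q ^ (p ^ N * m) - 1‖ ≤ 1 * ‖q ^ (p ^ N * m) - 1‖ := by
        gcongr
        rw [norm_pow]
        exact pow_le_one₀ (norm_nonneg _) hq1
    _ = ‖q ^ (p ^ N * m) - 1‖ := one_mul _
    _ ≤ ‖q ^ (p ^ N) - 1‖ := norm_pow_mul_sub_one_le hq1 _ _
    _ ≤ ‖q - 1‖ * (max (p : ℝ)⁻¹ (‖q - 1‖ ^ (p - 1))) ^ N := pow_pow_step hpK hq N

variable [CompleteSpace K]

lemma tendsto_qpow (hpK : ‖(p : K)‖ = (p : ℝ)⁻¹) {q : K} (hq : ‖q - 1‖ < 1) (z : ℤ_[p]) :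
    Tendsto (fun N : ℕ => q ^ (z.appr N)) atTop (𝓝 (qpow q z)) := by
  have hp : p.Prime := Fact.out
  set r := max (p : ℝ)⁻¹ (‖q - 1‖ ^ (p - 1)) with hrdef
  have hr0 : 0 ≤ r := le_max_of_le_left (by positivity)
  have hr1 : r < 1 := by
    apply max_lt
    · rw [inv_lt_one_iff₀]
      right
      exact_mod_cast hp.one_lt
    · exact pow_lt_one₀ (norm_nonneg _) hq (by have := hp.two_le; omega)
  have hc : CauchySeq (fun N : ℕ => q ^ (z.appr N)) := by
    apply cauchySeq_of_le_tendsto_0 (fun N => ‖q - 1‖ * r ^ N)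
    · intro n m N hn hm
      rw [dist_eq_norm]
      apply key_dvd_bound hpK hq
      have key : ∀ j, N ≤ j → (p : ℤ) ^ N ∣ (z.appr j : ℤ) - (z.appr N : ℤ) := by
        intro j hj
        have h1 := PadicInt.dvd_appr_sub_appr z N j hj
        have m1 := z.appr_mono hj
        have : ((p ^ N : ℕ) : ℤ) ∣ ((z.appr j - z.appr N : ℕ) : ℤ) :=
          Int.natCast_dvd_natCast.mpr h1
        rwa [Nat.cast_sub m1, Nat.cast_pow] at this
      have := (key n hn).sub (key m hm)
      rwa [sub_sub_sub_cancel_right] at this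
    · simpa using (tendsto_pow_atTop_nhds_zero_of_lt_one hr0 hr1).const_mul ‖q - 1‖
  obtain ⟨L, hL⟩ := cauchySeq_tendsto_of_complete hc
  rwa [qpow, hL.limUnder_eq]

lemma norm_qpow_sub_one_le (hpK : ‖(p : K)‖ = (p : ℝ)⁻¹) {q : K} (hq : ‖q - 1‖ < 1) (z : ℤ_[p]) :
    ‖qpow q z - 1‖ ≤ ‖q - 1‖ := by
  have hL := tendsto_qpow hpK hq z
  have h : Tendsto (fun N : ℕ => ‖q ^ z.appr N - 1‖) atTop (𝓝 ‖qpow q z - 1‖) :=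
    (hL.sub tendsto_const_nhds).norm
  exact le_of_tendsto h (Eventually.of_forall fun N =>
    norm_pow_sub_one_le (norm_le_one_of_sub_lt hq) _)

lemma norm_qpow_eq_one (hpK : ‖(p : K)‖ = (p : ℝ)⁻¹) {q : K} (hq : ‖q - 1‖ < 1) (z : ℤ_[p]) :
    ‖qpow q z‖ = 1 := by
  have h := norm_qpow_sub_one_le hpK hq z
  have h2 : ‖1 - qpow q z‖ < 1 := by
    rw [norm_sub_rev]
    exact lt_of_le_of_lt h hq
  calc ‖qpow q z‖ = ‖1 - (1 - qpow q z)‖ := by rw [sub_sub_cancel]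
    _ = 1 := norm_one_sub_of_lt h2

lemma qpow_natCast_mul (hpK : ‖(p : K)‖ = (p : ℝ)⁻¹) {q : K} (hq : ‖q - 1‖ < 1) (n : ℕ)
    (z : ℤ_[p]) : qpow q ((n : ℤ_[p]) * z) = qpow q z ^ n := by
  have h1 := tendsto_qpow hpK hq ((n : ℤ_[p]) * z)
  have h2 : Tendsto (fun N : ℕ => q ^ (z.appr N * n)) atTop (𝓝 (qpow q z ^ n)) := by
    have := (tendsto_qpow hpK hq z).pow n
    simpa [← pow_mul] using this
  set r := max (p : ℝ)⁻¹ (‖q - 1‖ ^ (p - 1)) with hrdef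
  have hp : p.Prime := Fact.out
  have hr0 : 0 ≤ r := le_max_of_le_left (by positivity)
  have hr1 : r < 1 := by
    apply max_lt
    · rw [inv_lt_one_iff₀]
      right
      exact_mod_cast hp.one_lt
    · exact pow_lt_one₀ (norm_nonneg _) hq (by have := hp.two_le; omega)
  have hdiff : ∀ N : ℕ, ‖q ^ (((n : ℤ_[p]) * z).appr N) - q ^ (z.appr N * n)‖
      ≤ ‖q - 1‖ * r ^ N := by
    intro N
    apply key_dvd_bound hpK hq
    have hA := PadicInt.appr_spec N ((n : ℤ_[p]) * z)
    have hB := PadicInt.appr_spec N z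
    have h3 : (n : ℤ_[p]) * (z - ((z.appr N : ℕ) : ℤ_[p])) ∈ Ideal.span {(p : ℤ_[p]) ^ N} :=
      Ideal.mul_mem_left _ _ hB
    have h4 := Ideal.sub_mem _ h3 hA
    have hmem : (((((( (n : ℤ_[p]) * z).appr N : ℤ) - ((z.appr N * n : ℕ) : ℤ)) : ℤ) : ℤ_[p]))
        ∈ Ideal.span {(p : ℤ_[p]) ^ N} := by
      convert h4 using 1
      push_cast
      ring
    rw [← PadicInt.norm_le_pow_iff_mem_span_pow] at hmem
    have := PadicInt.norm_int_le_pow_iff_dvd.mp hmem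
    exact_mod_cast this
  have h0 : Tendsto (fun N : ℕ => q ^ (((n : ℤ_[p]) * z).appr N) - q ^ (z.appr N * n)) atTop
      (𝓝 0) := by
    apply squeeze_zero_norm hdiff
    simpa using (tendsto_pow_atTop_nhds_zero_of_lt_one hr0 hr1).const_mul ‖q - 1‖
  have h5 : Tendsto (fun N : ℕ => q ^ (((n : ℤ_[p]) * z).appr N)) atTop
      (𝓝 (0 + qpow q z ^ n)) := by
    have := h0.add h2
    simpa using this
  rw [zero_add] at h5
  exact tendsto_nhds_unique h1 h5

end Padic

section Good

variable {K : Type*} [NormedField K] [IsUltrametricDist K]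

/-- Auxiliary class of functions `l ↦ ∏ (1 - β^l γᵢ)⁻¹` used in the finite-difference
argument. -/
inductive IsGood (β : K) (s : ℝ) : ℕ → (ℕ → K) → Prop
  | base : IsGood β s 0 (fun _ => (1 : K))
  | step {m : ℕ} {P : ℕ → K} (γ : K) (hγ : ‖γ‖ ≤ s) (hd : ∀ l : ℕ, s ≤ ‖1 - β ^ l * γ‖)
      (hP : IsGood β s m P) : IsGood β s (m + 1) (fun l => (1 - β ^ l * γ)⁻¹ * P l)

lemma IsGood.congr {β : K} {s : ℝ} {m : ℕ} {P Q : ℕ → K} (h : IsGood β s m P)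
    (he : ∀ l, P l = Q l) : IsGood β s m Q := (funext he : P = Q) ▸ h

lemma IsGood.norm_le {β : K} {s : ℝ} (hs : 1 ≤ s) {m : ℕ} {P : ℕ → K}
    (h : IsGood β s m P) (l : ℕ) : ‖P l‖ ≤ s⁻¹ ^ m := by
  have hs0 : (0:ℝ) < s := lt_of_lt_of_le one_pos hs
  induction h with
  | base => simp
  | @step m P γ hγ hd hP ih =>
    rw [norm_mul, norm_inv, pow_succ']
    refine mul_le_mul ?_ ih (norm_nonneg _) (by positivity)
    exact inv_anti₀ hs0 (hd l)

lemma IsGood.shift {β : K} {s : ℝ} (hβ : ‖β‖ ≤ 1) {m : ℕ} {P : ℕ → K}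
    (h : IsGood β s m P) : IsGood β s m (fun l => P (l + 1)) := by
  induction h with
  | base => exact IsGood.base
  | @step m P γ hγ hd hP ih =>
    have hγ' : ‖β * γ‖ ≤ s := by
      rw [norm_mul]
      calc ‖β‖ * ‖γ‖ ≤ 1 * s := mul_le_mul hβ hγ (norm_nonneg _) zero_le_one
        _ = s := one_mul _
    have hd' : ∀ l : ℕ, s ≤ ‖1 - β ^ l * (β * γ)‖ := by
      intro l
      have := hd (l + 1)
      rwa [pow_succ, mul_assoc] at this
    exact (IsGood.step (β * γ) hγ' hd' ih).congr fun l => by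
      simp only [pow_succ, mul_assoc]

lemma IsGood.diff {β : K} {t s : ℝ} (hβ : ‖β‖ ≤ 1) (hβ1 : ‖β - 1‖ ≤ t) (hs : 1 ≤ s)
    {m : ℕ} {P : ℕ → K} (h : IsGood β s m P) :
    ∃ (n : ℕ) (c : ℕ → K) (Q : ℕ → ℕ → K),
      (∀ i, i < n → ‖c i‖ ≤ t * s ∧ IsGood β s (m + 1) (Q i)) ∧
      ∀ l, P l - P (l + 1) = ∑ i ∈ range n, c i * β ^ l * Q i l := by
  have hs0 : (0:ℝ) < s := lt_of_lt_of_le one_pos hs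
  induction h with
  | base => exact ⟨0, fun _ => 0, fun _ _ => 0, by simp, by simp⟩
  | @step m P γ hγ hd hP ih =>
    obtain ⟨n, c, Q, hcQ, hsum⟩ := ih
    have hne : ∀ l : ℕ, (1 - β ^ l * γ) ≠ 0 := by
      intro l hll
      have := hd l
      rw [hll, norm_zero] at this
      linarith
    refine ⟨n + 1,
      fun i => if i < n then c i else -(β - 1) * γ,
      fun i => if i < n then (fun l => (1 - β ^ l * γ)⁻¹ * Q i l)
        else (fun l => (1 - β ^ l * γ)⁻¹ * ((1 - β ^ (l + 1) * γ)⁻¹ * P (l + 1))),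
      ?_, ?_⟩
    · intro i hi
      by_cases h' : i < n
      · simp only [if_pos h']
        exact ⟨(hcQ i h').1, IsGood.step γ hγ hd (hcQ i h').2⟩
      · simp only [if_neg h']
        constructor
        · rw [neg_mul, norm_neg, norm_mul]
          exact mul_le_mul hβ1 hγ (norm_nonneg _) ((norm_nonneg _).trans hβ1)
        · have hshift : IsGood β s (m + 1) (fun l => (1 - β ^ (l + 1) * γ)⁻¹ * P (l + 1)) :=
            (IsGood.step γ hγ hd hP).shift hβ
          exact IsGood.step γ hγ hd hshift
    · intro l
      have hc2 : (∑ i ∈ range n,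
            (fun i => if i < n then c i else -(β - 1) * γ) i * β ^ l *
              (fun i => if i < n then (fun l => (1 - β ^ l * γ)⁻¹ * Q i l)
                else (fun l => (1 - β ^ l * γ)⁻¹ * ((1 - β ^ (l + 1) * γ)⁻¹ * P (l + 1)))) i l)
          = ∑ i ∈ range n, c i * β ^ l * ((1 - β ^ l * γ)⁻¹ * Q i l) :=
        Finset.sum_congr rfl fun i hi => by
          simp only [if_pos (Finset.mem_range.mp hi)]
      rw [Finset.sum_range_succ, hc2]
      simp only [lt_irrefl, if_false, if_neg (lt_irrefl n)]
      have hH : (1 - β ^ l * γ)⁻¹ - (1 - β ^ (l + 1) * γ)⁻¹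
          = -(β - 1) * γ * β ^ l * ((1 - β ^ l * γ)⁻¹ * (1 - β ^ (l + 1) * γ)⁻¹) := by
        have h1 := hne l
        have h2 := hne (l + 1)
        rw [inv_sub_inv h1 h2, div_eq_mul_inv, mul_inv]
        ring
      have e1 : ∑ i ∈ range n, c i * β ^ l * ((1 - β ^ l * γ)⁻¹ * Q i l)
          = (1 - β ^ l * γ)⁻¹ * ∑ i ∈ range n, c i * β ^ l * Q i l := by
        rw [Finset.mul_sum]
        exact Finset.sum_congr rfl fun i _ => by ring
      calc (1 - β ^ l * γ)⁻¹ * P l - (1 - β ^ (l + 1) * γ)⁻¹ * P (l + 1)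
          = (1 - β ^ l * γ)⁻¹ * (P l - P (l + 1))
            + ((1 - β ^ l * γ)⁻¹ - (1 - β ^ (l + 1) * γ)⁻¹) * P (l + 1) := by ring
        _ = (1 - β ^ l * γ)⁻¹ * ∑ i ∈ range n, c i * β ^ l * Q i l
            + (-(β - 1) * γ * β ^ l * ((1 - β ^ l * γ)⁻¹ * (1 - β ^ (l + 1) * γ)⁻¹)) * P (l + 1)
            := by rw [hsum l, hH]
        _ = (∑ i ∈ range n, c i * β ^ l * ((1 - β ^ l * γ)⁻¹ * Q i l))
            + -(β - 1) * γ * β ^ l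
              * ((1 - β ^ l * γ)⁻¹ * ((1 - β ^ (l + 1) * γ)⁻¹ * P (l + 1))) := by
          rw [e1]; ring

lemma key_bound {β : K} {t s : ℝ} (ht : 0 ≤ t) (hs : 1 ≤ s) (hβ : ‖β‖ ≤ 1)
    (hβ1 : ‖β - 1‖ ≤ t) :
    ∀ (k m : ℕ) (P : ℕ → K) (α : K), ‖α‖ ≤ 1 → ‖α - 1‖ ≤ t → IsGood β s m P →
      ‖∑ l ∈ range (k + 1), ((k.choose l : K) * (-1) ^ l * α ^ l * P l)‖
        ≤ t ^ k * s⁻¹ ^ m := by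
  have hs0 : (0:ℝ) < s := lt_of_lt_of_le one_pos hs
  intro k
  induction k with
  | zero =>
    intro m P α hα hα1 hP
    simpa using hP.norm_le hs 0
  | succ k ih =>
    intro m P α hα hα1 hP
    have hps := pascal_sum k (fun l => α ^ l * P l)
    have hrw : ∑ l ∈ range (k + 1 + 1), ((k + 1).choose l : K) * (-1) ^ l * α ^ l * P l
        = ∑ l ∈ range (k + 1),
            ((k.choose l : K) * (-1) ^ l * (α ^ l * P l - α ^ (l + 1) * P (l + 1))) := by
      rw [← hps]
      exact Finset.sum_congr rfl fun l _ => by ring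
    rw [hrw]
    obtain ⟨n, c, Q, hcQ, hsum⟩ := hP.diff hβ hβ1 hs
    have split : ∑ l ∈ range (k + 1),
          ((k.choose l : K) * (-1) ^ l * (α ^ l * P l - α ^ (l + 1) * P (l + 1)))
        = (1 - α) * (∑ l ∈ range (k + 1), ((k.choose l : K) * (-1) ^ l * α ^ l * P (l + 1)))
          + ∑ i ∈ range n, c i
              * ∑ l ∈ range (k + 1), ((k.choose l : K) * (-1) ^ l * (α * β) ^ l * Q i l) := by
      have hterm : ∀ l, α ^ l * P l - α ^ (l + 1) * P (l + 1)
          = (1 - α) * (α ^ l * P (l + 1)) + ∑ i ∈ range n, c i * ((α * β) ^ l * Q i l) := by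
        intro l
        calc α ^ l * P l - α ^ (l + 1) * P (l + 1)
            = (1 - α) * (α ^ l * P (l + 1)) + α ^ l * (P l - P (l + 1)) := by ring
          _ = (1 - α) * (α ^ l * P (l + 1))
              + ∑ i ∈ range n, c i * ((α * β) ^ l * Q i l) := by
            rw [hsum l, Finset.mul_sum]
            congr 1
            exact Finset.sum_congr rfl fun i _ => by rw [mul_pow]; ring
      calc ∑ l ∈ range (k + 1),
            ((k.choose l : K) * (-1) ^ l * (α ^ l * P l - α ^ (l + 1) * P (l + 1)))
          = ∑ l ∈ range (k + 1),
              (((k.choose l : K) * (-1) ^ l * ((1 - α) * (α ^ l * P (l + 1))))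
                + ∑ i ∈ range n, ((k.choose l : K) * (-1) ^ l * (c i * ((α * β) ^ l * Q i l)))) := by
            refine Finset.sum_congr rfl fun l _ => ?_
            rw [hterm l, mul_add, Finset.mul_sum]
        _ = (∑ l ∈ range (k + 1), ((k.choose l : K) * (-1) ^ l * ((1 - α) * (α ^ l * P (l + 1)))))
            + ∑ l ∈ range (k + 1), ∑ i ∈ range n,
                ((k.choose l : K) * (-1) ^ l * (c i * ((α * β) ^ l * Q i l))) := by
            rw [Finset.sum_add_distrib]
        _ = _ := by
            rw [Finset.sum_comm]
            congr 1
            · rw [Finset.mul_sum]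
              exact Finset.sum_congr rfl fun l _ => by ring
            · refine Finset.sum_congr rfl fun i _ => ?_
              rw [Finset.mul_sum]
              exact Finset.sum_congr rfl fun l _ => by ring
    rw [split]
    refine (norm_add_le_max _ _).trans (max_le ?_ ?_)
    · rw [norm_mul]
      have b1 : ‖1 - α‖ ≤ t := by rwa [norm_sub_rev]
      have b2 := ih m (fun l => P (l + 1)) α hα hα1 (hP.shift hβ)
      calc ‖1 - α‖ * ‖∑ l ∈ range (k + 1), ((k.choose l : K) * (-1) ^ l * α ^ l * P (l + 1))‖
          ≤ t * (t ^ k * s⁻¹ ^ m) := mul_le_mul b1 b2 (norm_nonneg _) ht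
        _ = t ^ (k + 1) * s⁻¹ ^ m := by ring
    · refine norm_sum_le_of_forall_le_of_nonneg (by positivity) fun i hi => ?_
      rw [norm_mul]
      have hc := (hcQ i (Finset.mem_range.mp hi)).1
      have hQ := (hcQ i (Finset.mem_range.mp hi)).2
      have hαβ : ‖α * β‖ ≤ 1 := by
        rw [norm_mul]
        calc ‖α‖ * ‖β‖ ≤ 1 * 1 := mul_le_mul hα hβ (norm_nonneg _) zero_le_one
          _ = 1 := one_mul _
      have hαβ1 : ‖α * β - 1‖ ≤ t := by
        have h' : α * β - 1 = α * (β - 1) + (α - 1) := by ring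
        rw [h']
        refine (norm_add_le_max _ _).trans (max_le ?_ hα1)
        rw [norm_mul]
        calc ‖α‖ * ‖β - 1‖ ≤ 1 * t := mul_le_mul hα hβ1 (norm_nonneg _) zero_le_one
          _ = t := one_mul _
      have b3 := ih (m + 1) (Q i) (α * β) hαβ hαβ1 hQ
      calc ‖c i‖ * ‖∑ l ∈ range (k + 1), ((k.choose l : K) * (-1) ^ l * (α * β) ^ l * Q i l)‖
          ≤ (t * s) * (t ^ k * s⁻¹ ^ (m + 1)) :=
            mul_le_mul hc b3 (norm_nonneg _) (mul_nonneg ht (zero_le_one.trans hs))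
        _ = (t ^ (k + 1) * s⁻¹ ^ m) * (s * s⁻¹) := by ring
        _ = t ^ (k + 1) * s⁻¹ ^ m := by rw [mul_inv_cancel₀ (ne_of_gt hs0), mul_one]

end Good



/-- **boundedness of the measure.** For all `k ≥ 0`, `f ≥ 1`, `N ≥ 0` and
`0 ≤ x < f p^N`: `‖E^{(k)}_{u:a_1,q}(x ; f p^N)‖ ≤ 1`. -/
theorem norm_Emeas_le_one
    {p : ℕ} [Fact p.Prime] {K : Type*} [NormedField K] [CompleteSpace K]
    [IsUltrametricDist K] (hpK : ‖(p : K)‖ = (p : ℝ)⁻¹)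
    (a1 : ℤ_[p]) (ha1 : a1 ≠ 0)
    (u q : K) (hu : ∀ f : ℕ, 1 ≤ f → 1 ≤ ‖1 - u ^ f‖)
    (hq0 : 0 < ‖1 - q‖) (hq1 : ‖1 - q‖ < (p : ℝ) ^ (-(1 : ℝ) / ((p : ℝ) - 1)))
    (k f N x : ℕ) (hf : 1 ≤ f) (hx : x < f * p ^ N) :
    ‖Emeas u q a1 k (f * p ^ N) x‖ ≤ 1 := by
  have hp : p.Prime := Fact.out
  set M := f * p ^ N with hMdef
  have hM1 : 1 ≤ M := by
    have : 0 < M := Nat.mul_pos hf (pow_pos hp.pos N)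
    omega
  have ht1 : ‖1 - q‖ < 1 := by
    refine lt_of_lt_of_le hq1 ?_
    apply Real.rpow_le_one_of_one_le_of_nonpos
    · exact_mod_cast hp.one_lt.le
    · have h2 : (2 : ℝ) ≤ (p : ℝ) := by exact_mod_cast hp.two_le
      have h3 : (0 : ℝ) < (p : ℝ) - 1 := by linarith
      rw [neg_div]
      exact neg_nonpos.mpr (le_of_lt (div_pos one_pos h3))
  have hq' : ‖q - 1‖ < 1 := by rwa [norm_sub_rev]
  set t := ‖q - 1‖ with htdef
  have ht0 : 0 < t := by rw [htdef, norm_sub_rev]; exact hq0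
  set zx : ℤ_[p] := ((x : ℕ) : ℤ_[p]) * a1 with hzx
  set zM : ℤ_[p] := ((M : ℕ) : ℤ_[p]) * a1 with hzM
  set α := qpow q zx with hαdef
  set β := qpow q zM with hβdef
  have hαle : ‖α‖ ≤ 1 := le_of_eq (norm_qpow_eq_one hpK hq' zx)
  have hα1 : ‖α - 1‖ ≤ t := norm_qpow_sub_one_le hpK hq' zx
  have hβle : ‖β‖ ≤ 1 := le_of_eq (norm_qpow_eq_one hpK hq' zM)
  have hβ1 : ‖β - 1‖ ≤ t := norm_qpow_sub_one_le hpK hq' zM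
  set s : ℝ := max 1 ‖u ^ M‖ with hsdef
  have hs1 : 1 ≤ s := le_max_left _ _
  have hγ : ‖u ^ M‖ ≤ s := le_max_right _ _
  have hd : ∀ l : ℕ, s ≤ ‖1 - β ^ l * u ^ M‖ := by
    intro l
    have hβ1' : ‖β - 1‖ < 1 := lt_of_le_of_lt hβ1 hq'
    have hβl1 : ‖β ^ l - 1‖ ≤ t :=
      (norm_pow_sub_one_le (norm_le_one_of_sub_lt hβ1') l).trans hβ1
    rcases le_or_gt ‖u ^ M‖ 1 with hcase | hcase
    · have hseq : s = 1 := max_eq_left hcase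
      rw [hseq]
      have hA : (1 : ℝ) ≤ ‖1 - u ^ M‖ := hu M hM1
      have hB : ‖-((β ^ l - 1) * u ^ M)‖ < 1 := by
        rw [norm_neg, norm_mul]
        calc ‖β ^ l - 1‖ * ‖u ^ M‖ ≤ t * 1 :=
              mul_le_mul hβl1 hcase (norm_nonneg _) ht0.le
          _ < 1 := by rw [mul_one]; exact hq'
      have heq : (1 : K) - β ^ l * u ^ M = (1 - u ^ M) + -((β ^ l - 1) * u ^ M) := by ring
      rw [heq, norm_add_eq_max_of_norm_ne_norm (ne_of_gt (lt_of_lt_of_le hB hA))]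
      exact le_max_of_le_left hA
    · have hseq : s = ‖u ^ M‖ := max_eq_right hcase.le
      rw [hseq]
      have hβl : ‖β ^ l‖ = 1 := by
        rw [norm_pow, norm_qpow_eq_one hpK hq' zM, one_pow]
      have hnm : ‖-(β ^ l * u ^ M)‖ = ‖u ^ M‖ := by
        rw [norm_neg, norm_mul, hβl, one_mul]
      have heq : (1 : K) - β ^ l * u ^ M = 1 + -(β ^ l * u ^ M) := by ring
      rw [heq, norm_add_eq_max_of_norm_ne_norm (by rw [norm_one, hnm]; exact ne_of_lt hcase)]
      rw [hnm]
      exact le_max_right _ _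
  have hgood : IsGood β s 1 (fun l => (1 - β ^ l * u ^ M)⁻¹) :=
    (IsGood.step (u ^ M) hγ hd IsGood.base).congr fun l => by rw [mul_one]
  have hsum_rw : ∑ l ∈ Finset.range (k + 1),
        (k.choose l : K) * (-1) ^ l * qpow q (((l * x : ℕ) : ℤ_[p]) * a1) *
          (1 - qpow q (((l * M : ℕ) : ℤ_[p]) * a1) * u ^ M)⁻¹
      = ∑ l ∈ Finset.range (k + 1),
          ((k.choose l : K) * (-1) ^ l * α ^ l * (fun l => (1 - β ^ l * u ^ M)⁻¹) l) := by
    refine Finset.sum_congr rfl fun l _ => ?_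
    have e1 : (((l * x : ℕ) : ℤ_[p]) * a1) = ((l : ℕ) : ℤ_[p]) * zx := by
      rw [hzx]; push_cast; ring
    have e2 : (((l * M : ℕ) : ℤ_[p]) * a1) = ((l : ℕ) : ℤ_[p]) * zM := by
      rw [hzM]; push_cast; ring
    rw [e1, e2, hαdef, hβdef, qpow_natCast_mul hpK hq' l zx, qpow_natCast_mul hpK hq' l zM]
  have hbound := key_bound ht0.le hs1 hβle hβ1 k 1
    (fun l => (1 - β ^ l * u ^ M)⁻¹) α hαle hα1 hgood
  rw [Emeas, hsum_rw]
  have hnorm : ‖u ^ x * ((1 - q)⁻¹) ^ k * ∑ l ∈ Finset.range (k + 1),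
        ((k.choose l : K) * (-1) ^ l * α ^ l * (fun l => (1 - β ^ l * u ^ M)⁻¹) l)‖
      = ‖u‖ ^ x * (t⁻¹) ^ k * ‖∑ l ∈ Finset.range (k + 1),
        ((k.choose l : K) * (-1) ^ l * α ^ l * (fun l => (1 - β ^ l * u ^ M)⁻¹) l)‖ := by
    rw [norm_mul, norm_mul, norm_pow, norm_pow, norm_inv, htdef, norm_sub_rev]
  rw [hnorm]
  have hfinal : ‖u‖ ^ x * t⁻¹ ^ k * ‖∑ l ∈ Finset.range (k + 1),
        ((k.choose l : K) * (-1) ^ l * α ^ l * (fun l => (1 - β ^ l * u ^ M)⁻¹) l)‖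
      ≤ ‖u‖ ^ x * s⁻¹ := by
    calc ‖u‖ ^ x * t⁻¹ ^ k * ‖∑ l ∈ Finset.range (k + 1),
          ((k.choose l : K) * (-1) ^ l * α ^ l * (fun l => (1 - β ^ l * u ^ M)⁻¹) l)‖
        ≤ ‖u‖ ^ x * t⁻¹ ^ k * (t ^ k * s⁻¹ ^ 1) := by
          rw [mul_assoc, mul_assoc]
          refine mul_le_mul_of_nonneg_left ?_ (by positivity)
          exact mul_le_mul_of_nonneg_left hbound (by positivity)
      _ = ‖u‖ ^ x * s⁻¹ * (t⁻¹ * t) ^ k := by ring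
      _ = ‖u‖ ^ x * s⁻¹ := by
          rw [inv_mul_cancel₀ (ne_of_gt ht0), one_pow, mul_one]
  refine hfinal.trans ?_
  have hux_le_s : ‖u‖ ^ x ≤ s := by
    rcases le_or_gt ‖u‖ 1 with hc | hc
    · exact le_trans (pow_le_one₀ (norm_nonneg _) hc) hs1
    · have hseq : s = ‖u‖ ^ M := by
        rw [hsdef, norm_pow]
        exact max_eq_right (one_le_pow₀ hc.le)
      rw [hseq]
      exact pow_le_pow_right₀ hc.le (le_of_lt hx)
  calc ‖u‖ ^ x * s⁻¹ ≤ s * s⁻¹ := mul_le_mul_of_nonneg_right hux_le_s (by positivity)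
    _ = 1 := mul_inv_cancel₀ (ne_of_gt (lt_of_lt_of_le one_pos hs1))
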